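/- There exists an absolute constant C > 0 such that for every integer d ≥ 1 and all x, y ∈ (1/2, 1): | G_d(x) − G_d(y) | ≤ C·Γ(d/2 + 1)·|x − y|, where G_d(x) := x·4^x·Γ(d/2 + x)·Γ(x)·sin(πx). -/

import Mathlib

open Real

/-- `G_d(x) := x·4^x·Γ(d/2 + x)·Γ(x)·sin(πx)`. -/
noncomputable def Gfun (d : ℕ) (x : ℝ) : ℝ :=
  x * (4 : ℝ) ^ x * Real.Gamma ((d : ℝ) / 2 + x) * Real.Gamma x * Real.sin (Real.pi * x)

section Aux

open Set

lemma diffGamma {x : ℝ} (hx : 0 < x) : DifferentiableAt ℝ Real.Gamma x :=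
  Real.differentiableAt_Gamma fun m => by
    have : -(m : ℝ) ≤ 0 := neg_nonpos.mpr (Nat.cast_nonneg m)
    exact (lt_of_le_of_lt this hx).ne'

lemma gammaLeMax {a b t : ℝ} (ha : 0 < a) (hb : 0 < b) (ht : t ∈ Icc a b) :
    Real.Gamma t ≤ max (Real.Gamma a) (Real.Gamma b) := by
  refine Real.convexOn_Gamma.le_on_segment (mem_Ioi.2 ha) (mem_Ioi.2 hb) ?_
  rw [segment_eq_Icc (ht.1.trans ht.2)]
  exact ht

lemma gammaIcc12 {t : ℝ} (ht : t ∈ Icc (1:ℝ) 2) : Real.Gamma t ≤ 1 := by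
  have := gammaLeMax one_pos two_pos ht
  simpa [Real.Gamma_one, Real.Gamma_two] using this

lemma gammaSmall {s : ℝ} (hs : s ∈ Icc (1/4 : ℝ) 1) : Real.Gamma s ≤ 4 := by
  have hs0 : (0:ℝ) < s := lt_of_lt_of_le (by norm_num) hs.1
  have h1 : Real.Gamma (s+1) = s * Real.Gamma s := Real.Gamma_add_one hs0.ne'
  have h2 : Real.Gamma (s+1) ≤ 1 := gammaIcc12 ⟨by linarith [hs.1], by linarith [hs.2]⟩
  have h3 : 0 < Real.Gamma s := Real.Gamma_pos_of_pos hs0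
  nlinarith [hs.1]

lemma gammaD {d : ℕ} (hd : 1 ≤ d) {s : ℝ} (hs : s ∈ Icc ((d:ℝ)/2) ((d:ℝ)/2+1)) :
    Real.Gamma s ≤ 2 * Real.Gamma ((d:ℝ)/2+1) := by
  have hd1 : (1:ℝ) ≤ d := by exact_mod_cast hd
  have hpos : (0:ℝ) < (d:ℝ)/2 := by linarith
  have hrec : Real.Gamma ((d:ℝ)/2+1) = ((d:ℝ)/2) * Real.Gamma ((d:ℝ)/2) :=
    Real.Gamma_add_one hpos.ne'
  have hp1 : 0 < Real.Gamma ((d:ℝ)/2) := Real.Gamma_pos_of_pos hpos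
  have hp2 : 0 < Real.Gamma ((d:ℝ)/2+1) := Real.Gamma_pos_of_pos (by linarith)
  have h1 : Real.Gamma ((d:ℝ)/2) ≤ 2 * Real.Gamma ((d:ℝ)/2+1) := by nlinarith
  have := gammaLeMax hpos (by linarith) hs
  exact this.trans (max_le h1 (by linarith))

lemma deriv_gamma_le {t u : ℝ} (ht : 0 < t) (htu : t < u) :
    deriv Real.Gamma t * (u - t) ≤ Real.Gamma u - Real.Gamma t := by
  have h := Real.convexOn_Gamma.deriv_le_slope (mem_Ioi.2 ht) (mem_Ioi.2 (ht.trans htu)) htu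
    (diffGamma ht)
  rw [slope_def_field] at h
  have hut : 0 < u - t := by linarith
  have := mul_le_mul_of_nonneg_right h hut.le
  rwa [div_mul_cancel₀ _ hut.ne'] at this

lemma le_deriv_gamma {s t : ℝ} (hs : 0 < s) (hst : s < t) :
    Real.Gamma t - Real.Gamma s ≤ deriv Real.Gamma t * (t - s) := by
  have h := Real.convexOn_Gamma.slope_le_deriv (mem_Ioi.2 hs) (mem_Ioi.2 (hs.trans hst)) hst
    (diffGamma (hs.trans hst))
  rw [slope_def_field] at h
  have hut : 0 < t - s := by linarith
  have := mul_le_mul_of_nonneg_right h hut.le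
  rwa [div_mul_cancel₀ _ hut.ne'] at this

lemma keyderiv (d : ℕ) {x : ℝ} (hx1 : 1/2 < x) (hx2 : x < 1) :
    HasDerivAt (Gfun d)
      ((((1 * (4:ℝ)^x + x * ((4:ℝ)^x * Real.log 4)) * Real.Gamma ((d:ℝ)/2 + x)
          + x * (4:ℝ)^x * deriv Real.Gamma ((d:ℝ)/2 + x)) * Real.Gamma x
          + x * (4:ℝ)^x * Real.Gamma ((d:ℝ)/2 + x) * deriv Real.Gamma x) * Real.sin (Real.pi * x)
        + x * (4:ℝ)^x * Real.Gamma ((d:ℝ)/2 + x) * Real.Gamma x * (Real.cos (Real.pi * x) * Real.pi)) x := by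
  have hx0 : (0:ℝ) < x := by linarith
  have hc0 : (0:ℝ) ≤ (d:ℝ)/2 := by positivity
  have h1 : HasDerivAt (fun z : ℝ => z) 1 x := hasDerivAt_id' (𝕜 := ℝ) x
  have h2 : HasDerivAt (fun z : ℝ => (4:ℝ)^z) ((4:ℝ)^x * Real.log 4) x :=
    (Real.hasStrictDerivAt_const_rpow (by norm_num) x).hasDerivAt
  have h3 : HasDerivAt (fun z : ℝ => Real.Gamma ((d:ℝ)/2 + z))
      (deriv Real.Gamma ((d:ℝ)/2 + x)) x := by
    have hg := (diffGamma (show (0:ℝ) < (d:ℝ)/2 + x by linarith)).hasDerivAt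
    have := HasDerivAt.comp x hg ((hasDerivAt_id x).const_add ((d:ℝ)/2))
    simp only [mul_one] at this
    exact this
  have h4 : HasDerivAt Real.Gamma (deriv Real.Gamma x) x := (diffGamma hx0).hasDerivAt
  have h5 : HasDerivAt (fun z : ℝ => Real.sin (Real.pi * z))
      (Real.cos (Real.pi * x) * Real.pi) x := by
    have := HasDerivAt.comp x (Real.hasDerivAt_sin (Real.pi * x))
      ((hasDerivAt_id x).const_mul Real.pi)
    simp only [mul_one] at this
    exact this
  exact (((h1.mul h2).mul h3).mul h4).mul h5

end Aux

set_option maxHeartbeats 4000000 in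
/-- Pure arithmetic bound. -/
lemma arithBound {x q L g1 gcx gx s co dcx dx p : ℝ}
    (hx1 : 1/2 < x) (hx2 : x < 1)
    (hq_pos : 0 < q) (hq4 : q ≤ 4)
    (hL0 : 0 ≤ L) (hL3 : L ≤ 3)
    (hg1_pos : 0 < g1)
    (hgcx_pos : 0 < gcx) (hgcx2 : gcx ≤ 2 * g1)
    (hgx_pos : 0 < gx) (hgx4 : gx ≤ 4)
    (hp0 : 0 < p) (hp4 : p ≤ 4)
    (hs0 : 0 ≤ s) (hs1 : s ≤ 1) (hsle : s ≤ p * (1 - x))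
    (hco1 : |co| ≤ 1)
    (hub' : dcx * (1 - x) ≤ g1 - gcx) (hlb' : -(4:ℝ) * g1 ≤ dcx)
    (hdx16 : |dx| ≤ 16) :
    |(((1 * q + x * (q * L)) * gcx + x * q * dcx) * gx + x * q * gcx * dx) * s
        + x * q * gcx * gx * (co * p)| ≤ 1000 * g1 := by
  have hx0 : (0:ℝ) < x := by linarith
  have hdcxs : |dcx * s| ≤ 4 * g1 := by
    rw [abs_le]
    constructor
    · rcases le_or_gt 0 dcx with h | h
      · nlinarith [mul_nonneg h hs0]
      · nlinarith [mul_nonneg (neg_nonneg.2 h.le) (sub_nonneg.mpr hs1)]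
    · rcases le_or_gt dcx 0 with h | h
      · nlinarith [mul_nonneg (neg_nonneg.2 h) hs0]
      · have hh1 : dcx * s ≤ dcx * (p * (1 - x)) := mul_le_mul_of_nonneg_left hsle h.le
        have hh2 : p * (dcx * (1 - x)) ≤ p * (g1 - gcx) := mul_le_mul_of_nonneg_left hub' hp0.le
        nlinarith [mul_nonneg (show (0:ℝ) ≤ 4 - p by linarith) hg1_pos.le]
  have hm1 : 1 * q + x * (q * L) ≤ 16 := by
    nlinarith [mul_nonneg (show (0:ℝ) ≤ 4 - q by linarith) hL0,
      mul_nonneg (show (0:ℝ) ≤ 1 - x by linarith) (mul_nonneg hq_pos.le hL0)]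
  have hm0 : 0 ≤ 1 * q + x * (q * L) := by
    nlinarith [mul_nonneg hx0.le (mul_nonneg hq_pos.le hL0)]
  have hA : (1 * q + x * (q * L)) * gcx ≤ 32 * g1 := by
    have := mul_le_mul hm1 hgcx2 hgcx_pos.le (by norm_num : (0:ℝ) ≤ 16)
    linarith
  have hA0 : 0 ≤ (1 * q + x * (q * L)) * gcx := mul_nonneg hm0 hgcx_pos.le
  have hS1ub : (1 * q + x * (q * L)) * gcx * gx * s ≤ 128 * g1 := by
    have h1 : (1 * q + x * (q * L)) * gcx * gx ≤ 32 * g1 * 4 :=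
      mul_le_mul hA hgx4 hgx_pos.le (by positivity)
    have h2 : (1 * q + x * (q * L)) * gcx * gx * s ≤ (1 * q + x * (q * L)) * gcx * gx * 1 :=
      mul_le_mul_of_nonneg_left hs1 (mul_nonneg hA0 hgx_pos.le)
    linarith
  have hS1lb : 0 ≤ (1 * q + x * (q * L)) * gcx * gx * s :=
    mul_nonneg (mul_nonneg hA0 hgx_pos.le) hs0
  have hxq4 : x * q ≤ 4 := by nlinarith [mul_nonneg (show (0:ℝ) ≤ 1 - x by linarith) hq_pos.le]
  have hxqgx : x * q * gx ≤ 16 := by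
    have := mul_le_mul hxq4 hgx4 hgx_pos.le (by norm_num : (0:ℝ) ≤ 4)
    linarith
  have hxqgx0 : 0 ≤ x * q * gx := by positivity
  have hS2 : |x * q * gx * (dcx * s)| ≤ 64 * g1 := by
    rw [abs_mul, abs_of_nonneg hxqgx0]
    have := mul_le_mul hxqgx hdcxs (abs_nonneg _) (by norm_num : (0:ℝ) ≤ 16)
    linarith
  have hxqgcxs : x * q * gcx * s ≤ 8 * g1 := by
    nlinarith [mul_le_mul hxq4 hgcx2 hgcx_pos.le (by norm_num : (0:ℝ) ≤ 4),
      mul_nonneg (mul_nonneg (mul_nonneg hx0.le hq_pos.le) hgcx_pos.le) (sub_nonneg.mpr hs1)]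
  have hxqgcxs0 : 0 ≤ x * q * gcx * s := mul_nonneg (by positivity) hs0
  have hS3 : |x * q * gcx * s * dx| ≤ 128 * g1 := by
    rw [abs_mul, abs_of_nonneg hxqgcxs0]
    have := mul_le_mul hxqgcxs hdx16 (abs_nonneg _) (by positivity)
    linarith
  have hxqgcx8 : x * q * gcx ≤ 8 * g1 := by
    have := mul_le_mul hxq4 hgcx2 hgcx_pos.le (by norm_num : (0:ℝ) ≤ 4)
    linarith
  have hD32 : x * q * gcx * gx ≤ 32 * g1 := by
    have := mul_le_mul hxqgcx8 hgx4 hgx_pos.le (by positivity)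
    linarith
  have hD0 : 0 ≤ x * q * gcx * gx := by positivity
  have hcop : |co * p| ≤ 4 := by
    rw [abs_mul, abs_of_pos hp0]
    nlinarith [abs_nonneg co]

  have hS4 : |x * q * gcx * gx * (co * p)| ≤ 128 * g1 := by
    rw [abs_mul, abs_of_nonneg hD0]
    have := mul_le_mul hD32 hcop (abs_nonneg _) (by positivity)
    linarith
  have hdecomp :
      (((1 * q + x * (q * L)) * gcx + x * q * dcx) * gx + x * q * gcx * dx) * s
          + x * q * gcx * gx * (co * p)
        = (1 * q + x * (q * L)) * gcx * gx * s + x * q * gx * (dcx * s)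
          + x * q * gcx * s * dx + x * q * gcx * gx * (co * p) := by ring
  rw [hdecomp]
  have h1 := abs_add_le ((1 * q + x * (q * L)) * gcx * gx * s + x * q * gx * (dcx * s)
          + x * q * gcx * s * dx) (x * q * gcx * gx * (co * p))
  have h2 := abs_add_le ((1 * q + x * (q * L)) * gcx * gx * s + x * q * gx * (dcx * s))
          (x * q * gcx * s * dx)
  have h3 := abs_add_le ((1 * q + x * (q * L)) * gcx * gx * s) (x * q * gx * (dcx * s))
  have hS1 : |(1 * q + x * (q * L)) * gcx * gx * s| ≤ 128 * g1 := by
    rw [abs_of_nonneg hS1lb]; exact hS1ub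
  linarith

section Key

open Set

set_option maxHeartbeats 2000000 in
lemma keybound (d : ℕ) (hd : 1 ≤ d) {x : ℝ} (hx1 : 1/2 < x) (hx2 : x < 1) :
    |(((1 * (4:ℝ)^x + x * ((4:ℝ)^x * Real.log 4)) * Real.Gamma ((d:ℝ)/2 + x)
          + x * (4:ℝ)^x * deriv Real.Gamma ((d:ℝ)/2 + x)) * Real.Gamma x
          + x * (4:ℝ)^x * Real.Gamma ((d:ℝ)/2 + x) * deriv Real.Gamma x) * Real.sin (Real.pi * x)
        + x * (4:ℝ)^x * Real.Gamma ((d:ℝ)/2 + x) * Real.Gamma x * (Real.cos (Real.pi * x) * Real.pi)|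
      ≤ 1000 * Real.Gamma ((d:ℝ)/2 + 1) := by
  have hx0 : (0:ℝ) < x := by linarith
  have hd1 : (1:ℝ) ≤ d := by exact_mod_cast hd
  have hc : (1:ℝ)/2 ≤ (d:ℝ)/2 := by linarith
  have hq_pos : 0 < (4:ℝ)^x := Real.rpow_pos_of_pos (by norm_num) x
  have hq4 : (4:ℝ)^x ≤ 4 := by
    calc (4:ℝ)^x ≤ (4:ℝ)^(1:ℝ) := Real.rpow_le_rpow_of_exponent_le (by norm_num) hx2.le
    _ = 4 := Real.rpow_one 4
  have hL0 : 0 ≤ Real.log 4 := Real.log_nonneg (by norm_num)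
  have hL3 : Real.log 4 ≤ 3 := by
    have := Real.log_le_sub_one_of_pos (show (0:ℝ) < 4 by norm_num)
    linarith
  have hg1_pos : 0 < Real.Gamma ((d:ℝ)/2 + 1) := Real.Gamma_pos_of_pos (by linarith)
  have hgcx_pos : 0 < Real.Gamma ((d:ℝ)/2 + x) := Real.Gamma_pos_of_pos (by linarith)
  have hgcx2 : Real.Gamma ((d:ℝ)/2 + x) ≤ 2 * Real.Gamma ((d:ℝ)/2 + 1) :=
    gammaD hd ⟨by linarith, by linarith⟩
  have hgx_pos : 0 < Real.Gamma x := Real.Gamma_pos_of_pos hx0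
  have hgx4 : Real.Gamma x ≤ 4 := gammaSmall ⟨by linarith, by linarith⟩
  have hpi4 : Real.pi ≤ 4 := Real.pi_le_four
  have hpi0 : 0 < Real.pi := Real.pi_pos
  have hs0 : 0 ≤ Real.sin (Real.pi * x) :=
    Real.sin_nonneg_of_nonneg_of_le_pi (by positivity) (by nlinarith)
  have hs1 : Real.sin (Real.pi * x) ≤ 1 := Real.sin_le_one _
  have hsle : Real.sin (Real.pi * x) ≤ Real.pi * (1 - x) := by
    have heq : Real.sin (Real.pi * x) = Real.sin (Real.pi * (1 - x)) := by
      rw [show Real.pi * (1-x) = Real.pi - Real.pi * x by ring, Real.sin_pi_sub]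
    rw [heq]
    exact Real.sin_le (by nlinarith)
  have hco1 : |Real.cos (Real.pi * x)| ≤ 1 := Real.abs_cos_le_one _
  have hub' : deriv Real.Gamma ((d:ℝ)/2 + x) * (1 - x)
      ≤ Real.Gamma ((d:ℝ)/2 + 1) - Real.Gamma ((d:ℝ)/2 + x) := by
    have h := deriv_gamma_le (show (0:ℝ) < (d:ℝ)/2 + x by linarith)
      (show (d:ℝ)/2 + x < (d:ℝ)/2 + 1 by linarith)
    have he : ((d:ℝ)/2 + 1) - ((d:ℝ)/2 + x) = 1 - x := by ring
    rwa [he] at h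
  have hgm2 : Real.Gamma ((d:ℝ)/2 + x - 1/2) ≤ 2 * Real.Gamma ((d:ℝ)/2 + 1) :=
    gammaD hd ⟨by linarith, by linarith⟩
  have hgm_pos : 0 < Real.Gamma ((d:ℝ)/2 + x - 1/2) := Real.Gamma_pos_of_pos (by linarith)
  have hlb' : -(4:ℝ) * Real.Gamma ((d:ℝ)/2 + 1) ≤ deriv Real.Gamma ((d:ℝ)/2 + x) := by
    have h := le_deriv_gamma (show (0:ℝ) < (d:ℝ)/2 + x - 1/2 by linarith)
      (show (d:ℝ)/2 + x - 1/2 < (d:ℝ)/2 + x by linarith)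
    have he : ((d:ℝ)/2 + x) - ((d:ℝ)/2 + x - 1/2) = 1/2 := by ring
    rw [he] at h
    nlinarith
  have hdx16 : |deriv Real.Gamma x| ≤ 16 := by
    have hub : deriv Real.Gamma x * (1/2) ≤ Real.Gamma (x + 1/2) - Real.Gamma x := by
      have h := deriv_gamma_le hx0 (show x < x + 1/2 by linarith)
      have he : (x + 1/2) - x = 1/2 := by ring
      rwa [he] at h
    have hg12 : Real.Gamma (x + 1/2) ≤ 1 := gammaIcc12 ⟨by linarith, by linarith⟩
    have hlb : Real.Gamma x - Real.Gamma (x - 1/4) ≤ deriv Real.Gamma x * (1/4) := by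
      have h := le_deriv_gamma (show (0:ℝ) < x - 1/4 by linarith) (show x - 1/4 < x by linarith)
      have he : x - (x - 1/4) = 1/4 := by ring
      rwa [he] at h
    have hgm4 : Real.Gamma (x - 1/4) ≤ 4 := gammaSmall ⟨by linarith, by linarith⟩
    rw [abs_le]
    constructor <;> nlinarith
  exact arithBound hx1 hx2 hq_pos hq4 hL0 hL3 hg1_pos hgcx_pos hgcx2 hgx_pos hgx4
    hpi0 hpi4 hs0 hs1 hsle hco1 hub' hlb' hdx16

end Key

set_option maxHeartbeats 2000000 in
theorem stmt6 :
    ∃ C > 0, ∀ (d : ℕ), 1 ≤ d → ∀ x ∈ Set.Ioo (1/2 : ℝ) 1, ∀ y ∈ Set.Ioo (1/2 : ℝ) 1,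
      |Gfun d x - Gfun d y| ≤ C * Real.Gamma ((d : ℝ) / 2 + 1) * |x - y| := by
  refine ⟨1000, by norm_num, ?_⟩
  intro d hd x hx y hy
  have H : ∀ z ∈ Set.Ioo (1/2 : ℝ) 1,
      HasDerivWithinAt (Gfun d) (deriv (Gfun d) z) (Set.Ioo (1/2 : ℝ) 1) z := by
    intro z hz
    exact ((keyderiv d hz.1 hz.2).deriv ▸ keyderiv d hz.1 hz.2).hasDerivWithinAt
  have Hb : ∀ z ∈ Set.Ioo (1/2 : ℝ) 1,
      ‖deriv (Gfun d) z‖ ≤ 1000 * Real.Gamma ((d:ℝ)/2 + 1) := by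
    intro z hz
    rw [Real.norm_eq_abs, (keyderiv d hz.1 hz.2).deriv]
    exact keybound d hd hz.1 hz.2
  have := (convex_Ioo (1/2 : ℝ) 1).norm_image_sub_le_of_norm_hasDerivWithin_le H Hb hy hx
  simpa [Real.norm_eq_abs] using this
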